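/- The squared difference of posterior standard deviations integrated over the domain of future predictions satisfies ∫_S ∫_{t₀}^{+∞} (σ_D(x,t) − σ_D̃(x,t))² dt dx ≤ λ²·E·C₁₁ + λ²·Σ_{j=2}^{n} c_j·C_{1j} + λ²·Σ_{i=2}^{n} Σ_{j=2}^{n} M_{ij}·C_{ij}, where c ∈ ℝ^{n−1} is defined by cᵀ = G + Hᵀ and M = F − Δ̃⁻¹. -/

import Mathlib

open Matrix MeasureTheory

lemma aux_indshift {g : ℝ → ℝ} {a c : ℝ} :
    (Set.Ioi a).indicator (fun t => g (t - c)) = fun t => (Set.Ioi (a-c)).indicator g (t - c) := by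
  funext t
  by_cases ht : t ∈ Set.Ioi a
  · rw [Set.indicator_of_mem ht, Set.indicator_of_mem (by simpa [sub_lt_sub_iff_right] using ht)]
  · rw [Set.indicator_of_notMem ht,
      Set.indicator_of_notMem (by simpa [sub_lt_sub_iff_right] using ht)]

lemma aux_shiftIoi_integrableOn {g : ℝ → ℝ} {a : ℝ} (c : ℝ)
    (h : IntegrableOn g (Set.Ioi (a - c))) :
    IntegrableOn (fun t => g (t - c)) (Set.Ioi a) := by
  have h2 : Integrable ((Set.Ioi (a-c)).indicator g) := by
    rwa [integrable_indicator_iff measurableSet_Ioi]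
  have h3 := h2.comp_sub_right c
  rw [← integrable_indicator_iff measurableSet_Ioi, aux_indshift]
  exact h3

lemma aux_shiftIoi_integral (g : ℝ → ℝ) (a c : ℝ) :
    ∫ t in Set.Ioi a, g (t - c) = ∫ t in Set.Ioi (a - c), g t := by
  rw [← integral_indicator measurableSet_Ioi, ← integral_indicator measurableSet_Ioi,
    ← integral_sub_right_eq_self ((Set.Ioi (a - c)).indicator g) c]
  congr 1
  exact aux_indshift

lemma aux_sqrt_diff_sq_le {u v : ℝ} (hu : 0 ≤ u) (huv : u ≤ v) :
    (Real.sqrt u - Real.sqrt v) ^ 2 ≤ v - u := by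
  have hv : 0 ≤ v := le_trans hu huv
  have h1 : Real.sqrt u * Real.sqrt u = u := Real.mul_self_sqrt hu
  have h2 : Real.sqrt v * Real.sqrt v = v := Real.mul_self_sqrt hv
  have h3 : Real.sqrt u * Real.sqrt u ≤ Real.sqrt u * Real.sqrt v :=
    mul_le_mul_of_nonneg_left (Real.sqrt_le_sqrt huv) (Real.sqrt_nonneg u)
  nlinarith [Real.sqrt_nonneg u, Real.sqrt_nonneg v]

lemma aux_sum_mul_sub {n : ℕ} (f g h' : Fin n → ℝ) (c : ℝ) :
    ∑ j, f j * (g j - c * h' j) = (∑ j, f j * g j) - c * ∑ j, f j * h' j := by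
  rw [Finset.mul_sum, ← Finset.sum_sub_distrib]
  exact Finset.sum_congr rfl fun j _ => by ring

set_option maxHeartbeats 1000000 in
/-- Lemma 4 of the paper: integrated bound on the squared difference of posterior standard
deviations over the domain of future predictions. -/
theorem stmt_7
    (d n : ℕ) (hd : 1 ≤ d) (hn : 1 ≤ n)
    (lam sig : ℝ) (hlam : 0 < lam) (hsig : 0 < sig)
    (kS kT : ℝ → ℝ)
    (hkSmeas : Measurable kS) (hkTmeas : Measurable kT)
    (hkSrange : ∀ r, kS r ∈ Set.Icc (0 : ℝ) 1) (hkTrange : ∀ r, kT r ∈ Set.Icc (0 : ℝ) 1)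
    (hkS0 : kS 0 = 1) (hkT0 : kT 0 = 1)
    (k : (EuclideanSpace ℝ (Fin d) × ℝ) → (EuclideanSpace ℝ (Fin d) × ℝ) → ℝ)
    (hk : ∀ p q, k p q = lam * kS (‖p.1 - q.1‖) * kT (|p.2 - q.2|))
    (pts : Fin (n + 1) → EuclideanSpace ℝ (Fin d) × ℝ)
    (Δ : Matrix (Fin (n + 1)) (Fin (n + 1)) ℝ)
    (hΔ : ∀ i j, Δ i j = k (pts i) (pts j) + sig ^ 2 * (if i = j then 1 else 0))
    (hPD : Δ.PosDef)
    (Δt : Matrix (Fin n) (Fin n) ℝ)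
    (hΔt : Δt = Δ.submatrix Fin.succ Fin.succ)
    (k1 : Fin n → ℝ)
    (hk1 : ∀ j : Fin n, k1 j = k (pts 0) (pts j.succ))
    (E : ℝ) (hE : E = (lam + sig ^ 2 - k1 ⬝ᵥ Δt⁻¹ *ᵥ k1)⁻¹)
    (F : Matrix (Fin n) (Fin n) ℝ)
    (hF : F = (Δt - (lam + sig ^ 2)⁻¹ • vecMulVec k1 k1)⁻¹)
    (G : Fin n → ℝ) (hG : G = -(E • (k1 ᵥ* Δt⁻¹)))
    (H : Fin n → ℝ) (hH : H = -((lam + sig ^ 2)⁻¹ • (F *ᵥ k1)))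
    (σ2D σ2Dt : (EuclideanSpace ℝ (Fin d) × ℝ) → ℝ)
    (hσ2D : ∀ p, σ2D p = lam -
      (fun i : Fin (n + 1) => k p (pts i)) ⬝ᵥ Δ⁻¹ *ᵥ (fun i : Fin (n + 1) => k p (pts i)))
    (hσ2Dt : ∀ p, σ2Dt p = lam -
      (fun j : Fin n => k p (pts j.succ)) ⬝ᵥ Δt⁻¹ *ᵥ (fun j : Fin n => k p (pts j.succ)))
    (hborder : ∀ p : EuclideanSpace ℝ (Fin d) × ℝ,
      (Matrix.fromBlocks
        (Matrix.of fun (_ : Fin 1) (_ : Fin 1) => lam)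
        (Matrix.of fun (_ : Fin 1) (j : Fin (n + 1)) => k p (pts j))
        (Matrix.of fun (i : Fin (n + 1)) (_ : Fin 1) => k p (pts i))
        Δ).PosSemidef)
    (σD σDt : (EuclideanSpace ℝ (Fin d) × ℝ) → ℝ)
    (hσD : ∀ p, σD p = Real.sqrt (σ2D p))
    (hσDt : ∀ p, σDt p = Real.sqrt (σ2Dt p))
    (c : Fin n → ℝ) (hc : c = G + H)
    (M : Matrix (Fin n) (Fin n) ℝ) (hM : M = F - Δt⁻¹)
    (convS : EuclideanSpace ℝ (Fin d) → ℝ)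
    (hconvS : ∀ v, convS v = ∫ u : EuclideanSpace ℝ (Fin d), kS ‖u‖ * kS ‖v - u‖)
    (convT : ℝ → ℝ → ℝ)
    (hconvT : ∀ a' s, convT a' s = ∫ τ in Set.Ioi a', kT |τ| * kT |s - τ|)
    (hintS : ∀ v : EuclideanSpace ℝ (Fin d),
      Integrable (fun u : EuclideanSpace ℝ (Fin d) => kS ‖u‖ * kS ‖v - u‖))
    (hintT : ∀ a' s : ℝ, IntegrableOn (fun τ => kT |τ| * kT |s - τ|) (Set.Ioi a'))
    (t0 : ℝ) (S : Set (EuclideanSpace ℝ (Fin d))) (hS : MeasurableSet S)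
    (C : Matrix (Fin (n + 1)) (Fin (n + 1)) ℝ)
    (hC : ∀ i j, C i j =
      convS ((pts j).1 - (pts i).1) * convT (t0 - (pts i).2) ((pts j).2 - (pts i).2)) :
    (∫ x in S, ∫ t in Set.Ioi t0, (σD (x, t) - σDt (x, t)) ^ 2)
      ≤ lam ^ 2 * E * C 0 0 +
        lam ^ 2 * ∑ j : Fin n, c j * C 0 j.succ +
        lam ^ 2 * ∑ i : Fin n, ∑ j : Fin n, M i j * C i.succ j.succ := by
  classical
  have ha : (0:ℝ) < lam + sig ^ 2 := by positivity
  set a : ℝ := lam + sig ^ 2 with ha_def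
  have hksymm : ∀ p q', k p q' = k q' p := fun p q' => by
    rw [hk, hk, norm_sub_rev, abs_sub_comm]
  have hkdiag : ∀ p, k p p = lam := fun p => by
    rw [hk]; simp [hkS0, hkT0]
  have hΔ00 : Δ 0 0 = a := by rw [hΔ, hkdiag]; simp [ha_def]
  have hΔ0s : ∀ j : Fin n, Δ 0 j.succ = k1 j := fun j => by
    rw [hΔ, hk1]
    simp [(Fin.succ_ne_zero j).symm]
  have hΔs0 : ∀ i : Fin n, Δ i.succ 0 = k1 i := fun i => by
    rw [hΔ, hk1, hksymm]
    simp [Fin.succ_ne_zero i]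
  have hΔss : ∀ (i j : Fin n), Δ i.succ j.succ = Δt i j := fun i j => by rw [hΔt]; rfl
  have hΔtH : Δt.IsHermitian := hΔt ▸ hPD.1.submatrix _
  have hΔtPD : Δt.PosDef := by
    refine posDef_iff_dotProduct_mulVec.mpr ⟨hΔtH, fun x hx => ?_⟩
    have hy : (Fin.cons 0 x : Fin (n+1) → ℝ) ≠ 0 := by
      intro hcontra
      apply hx
      funext j
      have := congrFun hcontra j.succ
      simpa using this
    have h2 := hPD.dotProduct_mulVec_pos hy
    have hcalc : star (Fin.cons 0 x : Fin (n+1) → ℝ) ⬝ᵥ (Δ *ᵥ Fin.cons 0 x)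
        = star x ⬝ᵥ (Δt *ᵥ x) := by
      simp [dotProduct, mulVec, Fin.sum_univ_succ, hΔss]
    rw [← hcalc]
    exact h2
  have hΔdet : IsUnit Δ.det := hPD.det_pos.ne'.isUnit
  have hΔtdet : IsUnit Δt.det := hΔtPD.det_pos.ne'.isUnit
  have hΔtsymmT : Δtᵀ = Δt := by
    ext i j
    conv_rhs => rw [← hΔtH]
    simp [conjTranspose_apply]
  have hΔtinvsymm : (Δt⁻¹)ᵀ = Δt⁻¹ := by
    rw [Matrix.transpose_nonsing_inv, hΔtsymmT]
  set r : Fin n → ℝ := Δt⁻¹ *ᵥ k1 with hr_def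
  have hmulinv : Δt * Δt⁻¹ = 1 := Matrix.mul_nonsing_inv _ hΔtdet
  have hΔtr : Δt *ᵥ r = k1 := by
    rw [hr_def, Matrix.mulVec_mulVec, hmulinv, Matrix.one_mulVec]
  have hvecMul : k1 ᵥ* Δt⁻¹ = r := by
    rw [← hΔtinvsymm, Matrix.vecMul_transpose, hr_def]
  set s : ℝ := k1 ⬝ᵥ r with hs_def
  have hE' : E = (a - s)⁻¹ := hE
  set q : Fin (n+1) → ℝ := Fin.cons 1 (fun j => -r j) with hq_def
  have hΔtr' : ∀ i, ∑ j, Δt i j * r j = k1 i := fun i => by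
    have := congrFun hΔtr i
    simpa [mulVec, dotProduct] using this
  have hΔq : Δ *ᵥ q = Fin.cons (a - s) (fun _ => (0:ℝ)) := by
    funext i
    refine Fin.cases ?_ (fun i => ?_) i
    · show ∑ j, Δ 0 j * q j = a - s
      rw [Fin.sum_univ_succ]
      simp only [hq_def, Fin.cons_zero, Fin.cons_succ, hΔ00, hΔ0s, mul_one, mul_neg]
      rw [Finset.sum_neg_distrib]
      have : ∑ j, k1 j * r j = s := rfl
      rw [this]
      ring
    · show ∑ j, Δ i.succ j * q j = (Fin.cons (a - s) (fun _ => (0:ℝ)) : Fin (n+1) → ℝ) i.succ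
      rw [Fin.sum_univ_succ]
      simp only [hq_def, Fin.cons_zero, Fin.cons_succ, hΔs0, hΔss, mul_one, mul_neg]
      rw [Finset.sum_neg_distrib, hΔtr' i]
      simp
  have has : 0 < a - s := by
    have hq0 : q ≠ 0 := by
      intro hcontra
      have := congrFun hcontra 0
      rw [hq_def] at this
      simp at this
    have h2 := hPD.dotProduct_mulVec_pos hq0
    rw [star_trivial, hΔq] at h2
    simpa [hq_def, dotProduct, Fin.sum_univ_succ] using h2
  have hE1 : E * (a - s) = 1 := by rw [hE']; field_simp
  have hEpos : 0 < E := by rw [hE']; positivity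
  -- F identity
  have hFright : (Δt - a⁻¹ • vecMulVec k1 k1) * (Δt⁻¹ + E • vecMulVec r r) = 1 := by
    ext i j
    have h1 : ∑ x : Fin n, Δt i x * Δt⁻¹ x j = (1 : Matrix (Fin n) (Fin n) ℝ) i j := by
      rw [← Matrix.mul_apply, hmulinv]
    have h3 : ∑ x : Fin n, k1 x * Δt⁻¹ x j = r j := by
      have := congrFun hvecMul j
      simpa [vecMul, dotProduct] using this
    have h4 : ∑ x : Fin n, k1 x * r x = s := rfl
    simp only [Matrix.mul_apply, Matrix.sub_apply, Matrix.add_apply, Matrix.smul_apply,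
      vecMulVec_apply, smul_eq_mul]
    have expand : ∀ x, (Δt i x - a⁻¹ * (k1 i * k1 x)) * (Δt⁻¹ x j + E * (r x * r j))
        = (Δt i x * Δt⁻¹ x j + (E * r j) * (Δt i x * r x))
          - ((a⁻¹ * k1 i) * (k1 x * Δt⁻¹ x j) + (a⁻¹ * E * k1 i * r j) * (k1 x * r x)) :=
      fun x => by ring
    rw [Finset.sum_congr rfl (fun x _ => expand x), Finset.sum_sub_distrib,
      Finset.sum_add_distrib, Finset.sum_add_distrib, ← Finset.mul_sum, ← Finset.mul_sum,
      ← Finset.mul_sum, h1, hΔtr' i, h3, h4]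
    have hz : E * r j * k1 i - (a⁻¹ * k1 i * r j + a⁻¹ * E * k1 i * r j * s) = 0 := by
      have ha' : a ≠ 0 := ne_of_gt ha
      field_simp
      linear_combination (k1 i * r j) * hE1
    linarith [hz]
  have hFeq : F = Δt⁻¹ + E • vecMulVec r r := by
    rw [hF]
    exact Matrix.inv_eq_right_inv hFright
  have hM' : ∀ i j, M i j = E * (r i * r j) := fun i j => by
    rw [hM, hFeq]
    simp [Matrix.sub_apply, Matrix.add_apply, Matrix.smul_apply, vecMulVec_apply]
  have hc' : ∀ j, c j = -(2 * E * r j) := by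
    intro j
    have hGj : G j = -(E * r j) := by rw [hG]; simp [hvecMul]
    have hFk : F *ᵥ k1 = fun j2 => (E * a) * r j2 := by
      funext j2
      rw [hFeq]
      have h5 : ∑ x : Fin n, r x * k1 x = s := by
        rw [hs_def]; simp [dotProduct, mul_comm]
      show ∑ x, (Δt⁻¹ j2 x + E * (r j2 * r x)) * k1 x = E * a * r j2
      have expand : ∀ x, (Δt⁻¹ j2 x + E * (r j2 * r x)) * k1 x
          = Δt⁻¹ j2 x * k1 x + (E * r j2) * (r x * k1 x) := fun x => by ring
      rw [Finset.sum_congr rfl (fun x _ => expand x), Finset.sum_add_distrib, ← Finset.mul_sum,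
        h5]
      have h6 : ∑ x, Δt⁻¹ j2 x * k1 x = r j2 := by
        have := congrFun hr_def j2
        simpa [mulVec, dotProduct] using this.symm
      rw [h6]
      linear_combination (-(r j2)) * hE1
    have hHj : H j = -(E * r j) := by
      rw [hH, hFk]
      have ha' : a ≠ 0 := ne_of_gt ha
      simp only [Pi.neg_apply, Pi.smul_apply, smul_eq_mul]
      field_simp
    rw [hc]
    simp only [Pi.add_apply, hGj, hHj]
    ring
  -- kernel factorization
  have hKprod : ∀ (i : Fin (n+1)) (x : EuclideanSpace ℝ (Fin d)) (t : ℝ),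
      k (x, t) (pts i) = lam * (kS ‖x - (pts i).1‖ * kT |t - (pts i).2|) := by
    intro i x t
    rw [hk]
    ring
  -- time integrals
  set TT : Fin (n+1) → Fin (n+1) → ℝ :=
    fun i j => ∫ t in Set.Ioi t0, kT |t - (pts i).2| * kT |t - (pts j).2| with hTT_def
  set SS : Fin (n+1) → Fin (n+1) → ℝ :=
    fun i j => ∫ x : EuclideanSpace ℝ (Fin d), kS ‖x - (pts i).1‖ * kS ‖x - (pts j).1‖
    with hSS_def
  have hBeq : ∀ (i j : Fin (n+1)) (t : ℝ),
      (fun τ => kT |τ| * kT |((pts j).2 - (pts i).2) - τ|) (t - (pts i).2)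
        = kT |t - (pts i).2| * kT |t - (pts j).2| := by
    intro i j t
    simp only []
    congr 2
    rw [abs_sub_comm]
    ring_nf
  have hBint : ∀ i j : Fin (n+1),
      IntegrableOn (fun t => kT |t - (pts i).2| * kT |t - (pts j).2|) (Set.Ioi t0) := by
    intro i j
    have h0 : IntegrableOn (fun τ => kT |τ| * kT |((pts j).2 - (pts i).2) - τ|)
        (Set.Ioi (t0 - (pts i).2)) := hintT _ _
    have h1 := aux_shiftIoi_integrableOn (pts i).2 h0
    have h2 : (fun t => (fun τ => kT |τ| * kT |((pts j).2 - (pts i).2) - τ|) (t - (pts i).2))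
        = fun t => kT |t - (pts i).2| * kT |t - (pts j).2| := funext fun t => hBeq i j t
    rwa [h2] at h1
  have hTTval : ∀ i j, TT i j = convT (t0 - (pts i).2) ((pts j).2 - (pts i).2) := by
    intro i j
    rw [hconvT, hTT_def]
    rw [← aux_shiftIoi_integral (fun τ => kT |τ| * kT |((pts j).2 - (pts i).2) - τ|) t0 (pts i).2]
    refine setIntegral_congr_fun measurableSet_Ioi fun t _ => ?_
    exact (hBeq i j t).symm
  have hAeq : ∀ (i j : Fin (n+1)) (x : EuclideanSpace ℝ (Fin d)),
      (fun u => kS ‖u‖ * kS ‖((pts j).1 - (pts i).1) - u‖) (x - (pts i).1)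
        = kS ‖x - (pts i).1‖ * kS ‖x - (pts j).1‖ := by
    intro i j x
    simp only []
    congr 2
    rw [norm_sub_rev]
    congr 1
    abel
  have hAint : ∀ i j : Fin (n+1),
      Integrable (fun x : EuclideanSpace ℝ (Fin d) =>
        kS ‖x - (pts i).1‖ * kS ‖x - (pts j).1‖) := by
    intro i j
    have h0 := (hintS ((pts j).1 - (pts i).1)).comp_sub_right (pts i).1
    have h2 : (fun x : EuclideanSpace ℝ (Fin d) =>
        (fun u => kS ‖u‖ * kS ‖((pts j).1 - (pts i).1) - u‖) (x - (pts i).1))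
        = fun x => kS ‖x - (pts i).1‖ * kS ‖x - (pts j).1‖ := funext fun x => hAeq i j x
    rwa [h2] at h0
  have hSSval : ∀ i j, SS i j = convS ((pts j).1 - (pts i).1) := by
    intro i j
    rw [hconvS, hSS_def]
    rw [← integral_sub_right_eq_self
      (fun u : EuclideanSpace ℝ (Fin d) => kS ‖u‖ * kS ‖((pts j).1 - (pts i).1) - u‖) (pts i).1]
    refine integral_congr_ae (Filter.Eventually.of_forall fun x => ?_)
    exact (hAeq i j x).symm
  have hCval : ∀ i j, C i j = SS i j * TT i j := fun i j => by
    rw [hC, hSSval, hTTval]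
  -- expansion of the quadratic kernel function
  have hhexp : ∀ (x : EuclideanSpace ℝ (Fin d)) (t : ℝ),
      E * (∑ i, q i * k (x,t) (pts i)) ^ 2
        = ∑ i, ∑ j, (E * q i * q j * lam ^ 2) * (kS ‖x - (pts i).1‖ * kS ‖x - (pts j).1‖)
            * (kT |t - (pts i).2| * kT |t - (pts j).2|) := by
    intro x t
    rw [sq, Finset.sum_mul_sum, Finset.mul_sum]
    refine Finset.sum_congr rfl fun i _ => ?_
    rw [Finset.mul_sum]
    refine Finset.sum_congr rfl fun j _ => ?_
    rw [hKprod i x t, hKprod j x t]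
    ring
  set J' : EuclideanSpace ℝ (Fin d) → ℝ :=
    fun x => ∑ i, ∑ j, (E * q i * q j * lam ^ 2)
      * (kS ‖x - (pts i).1‖ * kS ‖x - (pts j).1‖) * TT i j with hJ'_def
  have hinner_int : ∀ x : EuclideanSpace ℝ (Fin d),
      IntegrableOn (fun t => E * (∑ i, q i * k (x,t) (pts i)) ^ 2) (Set.Ioi t0) := by
    intro x
    have h2 : (fun t => E * (∑ i, q i * k (x,t) (pts i)) ^ 2)
        = fun t => ∑ i, ∑ j, (E * q i * q j * lam ^ 2)
            * (kS ‖x - (pts i).1‖ * kS ‖x - (pts j).1‖)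
            * (kT |t - (pts i).2| * kT |t - (pts j).2|) := funext fun t => hhexp x t
    rw [h2]
    refine integrable_finset_sum _ fun i _ => integrable_finset_sum _ fun j _ => ?_
    exact (hBint i j).const_mul _
  have hJ'eq : ∀ x : EuclideanSpace ℝ (Fin d),
      (∫ t in Set.Ioi t0, E * (∑ i, q i * k (x,t) (pts i)) ^ 2) = J' x := by
    intro x
    have h2 : (∫ t in Set.Ioi t0, E * (∑ i, q i * k (x,t) (pts i)) ^ 2)
        = ∫ t in Set.Ioi t0, ∑ i, ∑ j, (E * q i * q j * lam ^ 2)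
            * (kS ‖x - (pts i).1‖ * kS ‖x - (pts j).1‖)
            * (kT |t - (pts i).2| * kT |t - (pts j).2|) :=
      integral_congr_ae (Filter.Eventually.of_forall fun t => hhexp x t)
    rw [h2, integral_finset_sum _ (fun i _ =>
      integrable_finset_sum _ fun j _ => (hBint i j).const_mul _)]
    rw [hJ'_def]
    refine Finset.sum_congr rfl fun i _ => ?_
    rw [integral_finset_sum _ (fun j _ => (hBint i j).const_mul _)]
    refine Finset.sum_congr rfl fun j _ => ?_
    rw [integral_const_mul]
  have hJ'int : Integrable J' := by
    rw [hJ'_def]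
    refine integrable_finset_sum _ fun i _ => integrable_finset_sum _ fun j _ => ?_
    exact ((hAint i j).const_mul _).mul_const _
  have hJ'val : ∫ x : EuclideanSpace ℝ (Fin d), J' x
      = ∑ i, ∑ j, (E * q i * q j * lam ^ 2) * SS i j * TT i j := by
    rw [hJ'_def, integral_finset_sum _ (fun i _ =>
      integrable_finset_sum _ fun j _ => ((hAint i j).const_mul _).mul_const _)]
    refine Finset.sum_congr rfl fun i _ => ?_
    rw [integral_finset_sum _ (fun j _ => ((hAint i j).const_mul _).mul_const _)]
    refine Finset.sum_congr rfl fun j _ => ?_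
    rw [integral_mul_const, integral_const_mul]
  have hJ'nonneg : ∀ x, 0 ≤ J' x := by
    intro x
    rw [← hJ'eq x]
    exact integral_nonneg fun t => mul_nonneg hEpos.le (sq_nonneg _)
  -- the key pointwise inequality
  have key : ∀ p : EuclideanSpace ℝ (Fin d) × ℝ,
      (σD p - σDt p) ^ 2 ≤ E * (∑ i, q i * k p (pts i)) ^ 2 := by
    intro p
    set κt : Fin n → ℝ := fun j => k p (pts j.succ) with hκt_def
    set u : Fin n → ℝ := Δt⁻¹ *ᵥ κt with hu_def
    set w : ℝ := k p (pts 0) - r ⬝ᵥ κt with hw_def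
    have hwsum : ∑ i, q i * k p (pts i) = w := by
      rw [Fin.sum_univ_succ, hw_def]
      simp only [hq_def, Fin.cons_zero, Fin.cons_succ, one_mul, neg_mul]
      rw [Finset.sum_neg_distrib]
      have : r ⬝ᵥ κt = ∑ j, r j * k p (pts j.succ) := rfl
      rw [this]
      ring
    have hΔtu : ∀ i, ∑ j, Δt i j * u j = κt i := by
      intro i
      have h0 : Δt *ᵥ u = κt := by
        rw [hu_def, Matrix.mulVec_mulVec, hmulinv, Matrix.one_mulVec]
      have := congrFun h0 i
      simpa [mulVec, dotProduct] using this
    set v : Fin (n+1) → ℝ := Fin.cons (E * w) (fun j => u j - E * w * r j) with hv_def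
    have hk1u : ∑ j, k1 j * u j = r ⬝ᵥ κt := by
      have h0 : k1 ⬝ᵥ u = (k1 ᵥ* Δt⁻¹) ⬝ᵥ κt := by
        rw [hu_def]
        exact Matrix.dotProduct_mulVec k1 Δt⁻¹ κt
      rw [hvecMul] at h0
      exact h0
    have hs' : ∑ j, k1 j * r j = s := rfl
    have hΔv : Δ *ᵥ v = fun i => k p (pts i) := by
      funext i
      refine Fin.cases ?_ (fun i => ?_) i
      · show ∑ j, Δ 0 j * v j = k p (pts 0)
        rw [Fin.sum_univ_succ]
        simp only [hv_def, Fin.cons_zero, Fin.cons_succ, hΔ00, hΔ0s]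
        rw [aux_sum_mul_sub k1 u r (E * w), hk1u, hs']
        rw [show k p (pts 0) = w + r ⬝ᵥ κt from by rw [hw_def]; ring]
        linear_combination w * hE1
      · show ∑ j, Δ i.succ j * v j = k p (pts i.succ)
        rw [Fin.sum_univ_succ]
        simp only [hv_def, Fin.cons_zero, Fin.cons_succ, hΔs0, hΔss]
        rw [aux_sum_mul_sub (fun j => Δt i j) u r (E * w), hΔtu i, hΔtr' i]
        have : κt i = k p (pts i.succ) := rfl
        rw [← this]
        ring
    have hvinv : Δ⁻¹ *ᵥ (fun i => k p (pts i)) = v := by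
      rw [← hΔv, Matrix.mulVec_mulVec, Matrix.nonsing_inv_mul _ hΔdet, Matrix.one_mulVec]
    have hκtu : ∑ j, κt j * u j = κt ⬝ᵥ u := rfl
    have hquad : (fun i => k p (pts i)) ⬝ᵥ Δ⁻¹ *ᵥ (fun i => k p (pts i))
        = E * w ^ 2 + κt ⬝ᵥ u := by
      rw [hvinv]
      show ∑ i, k p (pts i) * v i = E * w ^ 2 + κt ⬝ᵥ u
      rw [Fin.sum_univ_succ]
      simp only [hv_def, Fin.cons_zero, Fin.cons_succ]
      have hsummand : ∀ j : Fin n, k p (pts j.succ) * (u j - E * w * r j)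
          = κt j * (u j - E * w * r j) := fun j => rfl
      rw [Finset.sum_congr rfl fun j _ => hsummand j,
        aux_sum_mul_sub κt u r (E * w), hκtu]
      have hcr : ∑ j, κt j * r j = r ⬝ᵥ κt := by
        simp [dotProduct, mul_comm]
      rw [hcr]
      rw [show k p (pts 0) = w + r ⬝ᵥ κt from by rw [hw_def]; ring]
      ring
    have hσ2Dval : σ2D p = lam - (E * w ^ 2 + κt ⬝ᵥ u) := by
      rw [hσ2D p, hquad]
    have hσ2Dtval : σ2Dt p = lam - κt ⬝ᵥ u := by
      rw [hσ2Dt p, hκt_def, hu_def]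
    -- nonnegativity of σ2D p
    have hΔvsum : ∀ i, ∑ j, Δ i j * v j = k p (pts i) := fun i => by
      have := congrFun hΔv i
      simpa [mulVec, dotProduct] using this
    have hb := (hborder p).dotProduct_mulVec_nonneg (Sum.elim (fun _ : Fin 1 => (1:ℝ)) (fun i => -v i))
    have hbcalc : star (Sum.elim (fun _ : Fin 1 => (1:ℝ)) (fun i => -v i)) ⬝ᵥ
        ((Matrix.fromBlocks
          (Matrix.of fun (_ : Fin 1) (_ : Fin 1) => lam)
          (Matrix.of fun (_ : Fin 1) (j : Fin (n + 1)) => k p (pts j))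
          (Matrix.of fun (i : Fin (n + 1)) (_ : Fin 1) => k p (pts i))
          Δ) *ᵥ Sum.elim (fun _ : Fin 1 => (1:ℝ)) (fun i => -v i))
        = lam - ∑ i, k p (pts i) * v i := by
      simp only [star_trivial, dotProduct, mulVec, Fintype.sum_sum_type,
        Sum.elim_inl, Sum.elim_inr, Matrix.fromBlocks_apply₁₁, Matrix.fromBlocks_apply₁₂,
        Matrix.fromBlocks_apply₂₁, Matrix.fromBlocks_apply₂₂, Matrix.of_apply,
        Fin.sum_univ_one, mul_one, mul_neg, one_mul]
      rw [Finset.sum_neg_distrib]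
      have hrow : ∀ i : Fin (n+1),
          k p (pts i) + ∑ j, -(Δ i j * v j) = 0 := by
        intro i
        rw [Finset.sum_neg_distrib, hΔvsum i]
        ring
      have : ∀ i : Fin (n+1), -v i * (k p (pts i) + ∑ j, -(Δ i j * v j)) = 0 := by
        intro i
        rw [hrow i]
        ring
      rw [Finset.sum_congr rfl fun i _ => this i]
      simp only [dotProduct, mul_zero, Finset.sum_const_zero, add_zero]
      ring
    rw [hbcalc] at hb
    have hkvsum : ∑ i, k p (pts i) * v i = E * w ^ 2 + κt ⬝ᵥ u := by
      have h0 : (fun i => k p (pts i)) ⬝ᵥ v = ∑ i, k p (pts i) * v i := rfl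
      rw [← h0, ← hvinv]
      exact hquad
    rw [hkvsum] at hb
    have h0D : 0 ≤ σ2D p := by rw [hσ2Dval]; linarith
    have hdiff : σ2Dt p - σ2D p = E * w ^ 2 := by
      rw [hσ2Dval, hσ2Dtval]; ring
    have h0Dt : σ2D p ≤ σ2Dt p := by
      nlinarith [sq_nonneg w, hEpos.le]
    have hsq := aux_sqrt_diff_sq_le h0D h0Dt
    rw [hσD p, hσDt p, hwsum]
    linarith [hsq, hdiff.le, hdiff.ge]
  -- final sum identity
  have hq0 : q 0 = 1 := by rw [hq_def]; simp
  have hqs : ∀ j : Fin n, q j.succ = -r j := fun j => by rw [hq_def]; simp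
  have hSSsym0 : ∀ i : Fin n, SS i.succ 0 = SS 0 i.succ := by
    intro i
    rw [hSS_def]
    refine integral_congr_ae (Filter.Eventually.of_forall fun x => ?_)
    ring
  have hTTsym0 : ∀ i : Fin n, TT i.succ 0 = TT 0 i.succ := by
    intro i
    rw [hTT_def]
    refine integral_congr_ae (Filter.Eventually.of_forall fun t => ?_)
    ring
  have hfinal : (∑ i, ∑ j, (E * q i * q j * lam ^ 2) * SS i j * TT i j)
      = lam ^ 2 * E * C 0 0 +
        lam ^ 2 * ∑ j : Fin n, c j * C 0 j.succ +
        lam ^ 2 * ∑ i : Fin n, ∑ j : Fin n, M i j * C i.succ j.succ := by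
    rw [Fin.sum_univ_succ]
    rw [Fin.sum_univ_succ (f := fun j => (E * q 0 * q j * lam ^ 2) * SS 0 j * TT 0 j)]
    have hinner : ∀ i : Fin n, (∑ j, (E * q i.succ * q j * lam ^ 2) * SS i.succ j * TT i.succ j)
        = (E * q i.succ * q 0 * lam ^ 2) * SS i.succ 0 * TT i.succ 0
          + ∑ j : Fin n, (E * q i.succ * q j.succ * lam ^ 2) * SS i.succ j.succ
              * TT i.succ j.succ := fun i => Fin.sum_univ_succ _
    rw [Finset.sum_congr rfl fun i _ => hinner i, Finset.sum_add_distrib]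
    have hmid : (∑ j : Fin n, (E * q 0 * q j.succ * lam ^ 2) * SS 0 j.succ * TT 0 j.succ)
        + (∑ i : Fin n, (E * q i.succ * q 0 * lam ^ 2) * SS i.succ 0 * TT i.succ 0)
        = lam ^ 2 * ∑ j : Fin n, c j * C 0 j.succ := by
      rw [Finset.mul_sum, ← Finset.sum_add_distrib]
      refine Finset.sum_congr rfl fun j _ => ?_
      rw [hSSsym0 j, hTTsym0 j, hq0, hqs j, hc' j, hCval]
      ring
    have hcorner : (∑ i : Fin n, ∑ j : Fin n,
          (E * q i.succ * q j.succ * lam ^ 2) * SS i.succ j.succ * TT i.succ j.succ)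
        = lam ^ 2 * ∑ i : Fin n, ∑ j : Fin n, M i j * C i.succ j.succ := by
      rw [Finset.mul_sum]
      refine Finset.sum_congr rfl fun i _ => ?_
      rw [Finset.mul_sum]
      refine Finset.sum_congr rfl fun j _ => ?_
      rw [hqs i, hqs j, hM', hCval]
      ring
    have hhead : (E * q 0 * q 0 * lam ^ 2) * SS 0 0 * TT 0 0 = lam ^ 2 * E * C 0 0 := by
      rw [hq0, hCval]
      ring
    linear_combination hhead + hmid + hcorner
  -- final chain
  calc (∫ x in S, ∫ t in Set.Ioi t0, (σD (x, t) - σDt (x, t)) ^ 2)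
      ≤ ∫ x in S, J' x := by
        refine integral_mono_of_nonneg
          (Filter.Eventually.of_forall fun x => integral_nonneg fun t => sq_nonneg _)
          hJ'int.integrableOn
          (Filter.Eventually.of_forall fun x => ?_)
        rw [← hJ'eq x]
        exact integral_mono_of_nonneg
          (Filter.Eventually.of_forall fun t => sq_nonneg _)
          (hinner_int x)
          (Filter.Eventually.of_forall fun t => key (x, t))
    _ ≤ ∫ x, J' x := setIntegral_le_integral hJ'int (Filter.Eventually.of_forall hJ'nonneg)
    _ = ∑ i, ∑ j, (E * q i * q j * lam ^ 2) * SS i j * TT i j := hJ'val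
    _ = _ := hfinal
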